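/- Let a be a letter and let W be a word over an alphabet containing a with |W| ≥ ℓ, and let 0 < k < ℓ be integers. Then d(a^ℓ, W) ≤ d(a^k, W), and if equality holds then either d(a^ℓ, W) = 1 or d(a^k, W) = 0. -/

import Mathlib

open Filter

/-- `U` is an instance of `V`: image of `V` under a nonerasing substitution. -/
def IsInstance {Γ β : Type*} (V : List Γ) (U : List β) : Prop :=
  ∃ φ : Γ → List β, (∀ x ∈ V, φ x ≠ []) ∧ U = (V.map φ).flatten

/-- `W` encounters `V`: some factor of `W` is an instance of `V`. -/
def Encounters {Γ β : Type*} (V : List Γ) (W : List β) : Prop :=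
  ∃ U : List β, U <:+: W ∧ IsInstance V U

/-- Zimin words over alphabet ℕ. -/
def Zimin : ℕ → List ℕ
  | 0 => []
  | n + 1 => Zimin n ++ [n] ++ Zimin n

/-- Least M such that every q-ary word of length M encounters Z_n. -/
noncomputable def fZ (n q : ℕ) : ℕ :=
  sInf {M | ∀ W : List (Fin q), W.length = M → Encounters (Zimin n) W}

/-- Exponential tower with b copies of a. -/
def tower (a : ℕ) : ℕ → ℕ
  | 0 => 1
  | b + 1 => a ^ tower a b

/-- Number of length-M q-ary words that are instances of V. -/
noncomputable def instCount (V : List ℕ) (q M : ℕ) : ℕ :=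
  Nat.card {W : Fin M → Fin q // IsInstance V (List.ofFn W)}

/-- Factor density d(V,W). -/
noncomputable def factorDensity {α : Type*} [DecidableEq α] (V W : List α) : ℝ :=
  (((((Finset.range (W.length + 1)) ×ˢ (Finset.range (W.length + 1))).filter
      (fun p => p.1 < p.2 ∧ (W.drop p.1).take (p.2 - p.1) = V)).card : ℝ)) /
    ((W.length : ℝ) + 1 - (V.length : ℝ))

/-- Number of substrings of W (given by position pairs) that are V-instances. -/
noncomputable def instSubCount {Γ β : Type*} (V : List Γ) (W : List β) : ℕ :=
  Nat.card {p : ℕ × ℕ //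
    p.1 < p.2 ∧ p.2 ≤ W.length ∧ IsInstance V ((W.drop p.1).take (p.2 - p.1))}

/-- Instance density δ(V,W). -/
noncomputable def instDensity {Γ β : Type*} (V : List Γ) (W : List β) : ℝ :=
  (instSubCount V W : ℝ) / ((W.length + 1).choose 2 : ℝ)

/-- q-liminf density of V. -/
noncomputable def liminfDensity {Γ : Type*} (V : List Γ) (q : ℕ) : ℝ :=
  Filter.liminf (fun W : List (Fin q) => instDensity V W) (Filter.comap List.length Filter.atTop)

/-- Expected instance density of V in a uniformly random q-ary word of length n. -/
noncomputable def expDensity {Γ : Type*} (V : List Γ) (q n : ℕ) : ℝ :=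
  (∑ W : Fin n → Fin q, instDensity V (List.ofFn W)) / (q : ℝ) ^ n

/-- Variance of the instance density of V in a uniformly random q-ary word of length n. -/
noncomputable def varDensity {Γ : Type*} (V : List Γ) (q n : ℕ) : ℝ :=
  (∑ W : Fin n → Fin q, (instDensity V (List.ofFn W) - expDensity V q n) ^ 2) / (q : ℝ) ^ n

/-- Probability that a uniformly random q-ary word of length n is a V-instance. -/
noncomputable def instProb {Γ : Type*} (V : List Γ) (q n : ℕ) : ℝ :=
  (Nat.card {W : Fin n → Fin q // IsInstance V (List.ofFn W)} : ℝ) / (q : ℝ) ^ n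

/-- V is doubled: every letter occurring in V occurs at least twice. -/
def Doubled {Γ : Type*} [DecidableEq Γ] (V : List Γ) : Prop :=
  ∀ x ∈ V, 2 ≤ V.count x

/-- Number of letter recurrences ‖V‖ = |V| - |L(V)|. -/
def recurCount {Γ : Type*} [DecidableEq Γ] (V : List Γ) : ℕ :=
  V.length - V.dedup.length

def occSet {α : Type*} [DecidableEq α] (a : α) (m : ℕ) (W : List α) : Finset ℕ :=
  (Finset.range (W.length + 1)).filter (fun i => (W.drop i).take m = List.replicate m a)

lemma mem_occSet_le {α : Type*} [DecidableEq α] {a : α} {m : ℕ} {W : List α} {i : ℕ}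
    (hi : i ∈ occSet a m W) : i + m ≤ W.length := by
  simp only [occSet, Finset.mem_filter, Finset.mem_range] at hi
  obtain ⟨h1, h2⟩ := hi
  have := congrArg List.length h2
  simp [List.length_take, List.length_drop] at this
  omega

lemma occ_card_eq {α : Type*} [DecidableEq α] (a : α) (m : ℕ) (hm : 0 < m) (W : List α) :
    ((((Finset.range (W.length + 1)) ×ˢ (Finset.range (W.length + 1))).filter
      (fun p => p.1 < p.2 ∧ (W.drop p.1).take (p.2 - p.1) = List.replicate m a)).card)
    = (occSet a m W).card := by
  apply Finset.card_bij' (fun p _ => p.1) (fun i _ => (i, i + m))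
  · rintro ⟨p1, p2⟩ hp
    simp only [Finset.mem_filter, Finset.mem_product, Finset.mem_range] at hp
    obtain ⟨⟨hp1, hp2⟩, hlt, heq⟩ := hp
    have hlen := congrArg List.length heq
    simp [List.length_take, List.length_drop] at hlen
    have hm' : p2 - p1 = m := by omega
    simp only [occSet, Finset.mem_filter, Finset.mem_range]
    rw [hm'] at heq
    exact ⟨hp1, heq⟩
  · intro i hi
    have h2 := mem_occSet_le hi
    simp only [occSet, Finset.mem_filter, Finset.mem_range] at hi
    simp only [Finset.mem_filter, Finset.mem_product, Finset.mem_range]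
    refine ⟨⟨hi.1, by omega⟩, by omega, ?_⟩
    have : i + m - i = m := by omega
    rw [this]; exact hi.2
  · rintro ⟨p1, p2⟩ hp
    simp only [Finset.mem_filter, Finset.mem_product, Finset.mem_range] at hp
    obtain ⟨⟨hp1, hp2⟩, hlt, heq⟩ := hp
    have hlen := congrArg List.length heq
    simp [List.length_take, List.length_drop] at hlen
    have hp2' : p2 = p1 + m := by omega
    simp [hp2']
  · intro i hi; rfl

lemma density_eq {α : Type*} [DecidableEq α] (a : α) (m : ℕ) (hm : 0 < m) (W : List α) :
    factorDensity (List.replicate m a) W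
      = ((occSet a m W).card : ℝ) / ((W.length : ℝ) + 1 - m) := by
  rw [factorDensity, occ_card_eq a m hm W, List.length_replicate]

lemma occ_shift {α : Type*} [DecidableEq α] {a : α} {k ℓ : ℕ} {W : List α} {i j : ℕ}
    (hi : i ∈ occSet a ℓ W) (hjk : j + k ≤ ℓ) : i + j ∈ occSet a k W := by
  have hle := mem_occSet_le hi
  simp only [occSet, Finset.mem_filter, Finset.mem_range] at hi ⊢
  refine ⟨by omega, ?_⟩
  have h1 : W.drop (i + j) = (W.drop i).drop j := by
    rw [List.drop_drop, Nat.add_comm]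
  rw [h1]
  calc ((W.drop i).drop j).take k
      = ((W.drop i).take (j + k)).drop j := List.take_drop
    _ = (((W.drop i).take ℓ).take (j + k)).drop j := by
        rw [List.take_take, Nat.min_eq_left hjk]
    _ = ((List.replicate ℓ a).take (j + k)).drop j := by rw [hi.2]
    _ = List.replicate k a := by
        rw [List.take_replicate, List.drop_replicate, Nat.min_eq_left hjk]
        congr 1; omega

lemma occ_card_le {α : Type*} [DecidableEq α] {a : α} {ℓ : ℕ} {W : List α} :
    (occSet a ℓ W).card ≤ W.length + 1 - ℓ := by
  calc (occSet a ℓ W).card ≤ (Finset.range (W.length + 1 - ℓ)).card := by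
        apply Finset.card_le_card
        intro i hi
        have := mem_occSet_le hi
        simp only [Finset.mem_range]; omega
    _ = W.length + 1 - ℓ := Finset.card_range _

lemma occ_card_add {α : Type*} [DecidableEq α] {a : α} {k ℓ : ℕ} (hk : 0 < k) (hkl : k < ℓ)
    {W : List α} (hne : (occSet a ℓ W).Nonempty) :
    (occSet a ℓ W).card + (ℓ - k) ≤ (occSet a k W).card := by
  set i := (occSet a ℓ W).max' hne with hidef
  have himem : i ∈ occSet a ℓ W := (occSet a ℓ W).max'_mem hne
  have hsub : occSet a ℓ W ∪ (Finset.Icc 1 (ℓ - k)).image (fun j => i + j) ⊆ occSet a k W := by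
    intro x hx
    rcases Finset.mem_union.mp hx with hx | hx
    · have := occ_shift (k := k) (j := 0) hx (by omega)
      simpa using this
    · obtain ⟨j, hj, rfl⟩ := Finset.mem_image.mp hx
      simp only [Finset.mem_Icc] at hj
      exact occ_shift (k := k) (j := j) himem (by omega)
  have hdisj : Disjoint (occSet a ℓ W) ((Finset.Icc 1 (ℓ - k)).image (fun j => i + j)) := by
    rw [Finset.disjoint_right]
    intro x hx hx'
    obtain ⟨j, hj, rfl⟩ := Finset.mem_image.mp hx
    simp only [Finset.mem_Icc] at hj
    have := Finset.le_max' _ _ hx'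
    omega
  have hcard : ((Finset.Icc 1 (ℓ - k)).image (fun j => i + j)).card = ℓ - k := by
    rw [Finset.card_image_of_injective _ (add_right_injective i), Nat.card_Icc]
    omega
  calc (occSet a ℓ W).card + (ℓ - k)
      = (occSet a ℓ W ∪ (Finset.Icc 1 (ℓ - k)).image (fun j => i + j)).card := by
        rw [Finset.card_union_of_disjoint hdisj, hcard]
    _ ≤ (occSet a k W).card := Finset.card_le_card hsub

theorem stmt4 {α : Type*} [DecidableEq α] (a : α) (k ℓ : ℕ) (hk : 0 < k) (hkl : k < ℓ)
    (W : List α) (hW : ℓ ≤ W.length) :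
    factorDensity (List.replicate ℓ a) W ≤ factorDensity (List.replicate k a) W ∧
    (factorDensity (List.replicate ℓ a) W = factorDensity (List.replicate k a) W →
      factorDensity (List.replicate ℓ a) W = 1 ∨ factorDensity (List.replicate k a) W = 0) := by
  have hdl := density_eq a ℓ (by omega) W
  have hdk := density_eq a k hk W
  set n := W.length with hn
  set A := (occSet a ℓ W).card with hA
  set B := (occSet a k W).card with hB
  have huR : (0 : ℝ) < (n : ℝ) + 1 - ℓ := by
    have : (ℓ : ℝ) ≤ n := by exact_mod_cast hW
    linarith
  have hvR : (0 : ℝ) < (n : ℝ) + 1 - k := by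
    have : (k : ℝ) < ℓ := by exact_mod_cast hkl
    linarith
  have hAle : (A : ℝ) ≤ (n : ℝ) + 1 - ℓ := by
    have := occ_card_le (a := a) (ℓ := ℓ) (W := W)
    have h2 : (A : ℝ) ≤ ((n + 1 - ℓ : ℕ) : ℝ) := by exact_mod_cast this
    have h3 : ((n + 1 - ℓ : ℕ) : ℝ) = (n : ℝ) + 1 - ℓ := by
      rw [Nat.cast_sub (by omega)]
      push_cast
      ring
    linarith
  have key : A ≠ 0 → (A : ℝ) + ((ℓ : ℝ) - k) ≤ B := by
    intro hA0
    have hne : (occSet a ℓ W).Nonempty := Finset.card_pos.mp (by omega)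
    have := occ_card_add hk hkl hne
    have h2 : ((A + (ℓ - k) : ℕ) : ℝ) ≤ (B : ℝ) := by exact_mod_cast this
    have h3 : ((A + (ℓ - k) : ℕ) : ℝ) = (A : ℝ) + ((ℓ : ℝ) - k) := by
      rw [Nat.cast_add, Nat.cast_sub (by omega)]
    linarith
  rw [hdl, hdk]
  constructor
  · rw [div_le_div_iff₀ huR hvR]
    by_cases hA0 : A = 0
    · simp [hA0]
      positivity
    · have hB' := key hA0
      have hdpos : (0 : ℝ) < (ℓ : ℝ) - k := by
        have : (k : ℝ) < ℓ := by exact_mod_cast hkl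
        linarith
      nlinarith [hB', hAle, huR, hdpos]
  · intro heq
    rw [div_eq_div_iff (ne_of_gt huR) (ne_of_gt hvR)] at heq
    by_cases hA0 : A = 0
    · right
      have hB0 : (B : ℝ) = 0 := by
        rw [hA0] at heq
        simp only [Nat.cast_zero, zero_mul] at heq
        rcases mul_eq_zero.mp heq.symm with h | h
        · exact h
        · linarith
      rw [hB0, zero_div]
    · left
      have hB' := key hA0
      have hdpos : (0 : ℝ) < (ℓ : ℝ) - k := by
        have : (k : ℝ) < ℓ := by exact_mod_cast hkl
        linarith
      have hAge : ((n : ℝ) + 1 - ℓ) ≤ A := by nlinarith [hB', heq, hAle]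
      have : (A : ℝ) = (n : ℝ) + 1 - ℓ := le_antisymm hAle hAge
      rw [this, div_self (ne_of_gt huR)]
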